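/- In the model with individual effects and pairwise interactions, for any two distinct i, j ∈ V the auxiliary-model weight satisfies w̃_{{i,j}} = |Pr(y = +1 | x_i = +1, x_j = +1) + Pr(y = +1 | x_i = −1, x_j = −1) − 1|. Equivalently, Pr(ỹ = +1 | x_i = +1, x_j = +1) = (1/2)·Pr(y = +1 | x_i = +1, x_j = +1) + (1/2)·Pr(y = +1 | x_i = −1, x_j = −1). -/

import Mathlib

open Finset

/-- The sigmoid function `σ(t) = eᵗ/(1+eᵗ)`. -/
noncomputable def sigmoid (t : ℝ) : ℝ := Real.exp t / (1 + Real.exp t)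

/-- Interpretation of a Boolean as `±1 ∈ ℝ`. -/
def pm (b : Bool) : ℝ := if b then 1 else -1

/-- `Σ_{{i,j}∈E} β_{{i,j}} x_i x_j`, summed over unordered pairs of distinct indices. -/
noncomputable def fld (d : ℕ) (β : Fin d → Fin d → ℝ) (x : Fin d → Bool) : ℝ :=
  ∑ i : Fin d, ∑ j ∈ Finset.Ioi i, β i j * pm (x i) * pm (x j)

/-- `Pr(y = s·(+1) | x_V ∈ A)`.  Since the covariates are i.i.d. uniform on `{−1,+1}`
and `Pr(y = s | x_V = x) = σ(s · Σ β x_i x_j)`, this conditional probability equals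
`(Σ_{x∈A} σ(s · fld x)) / |A|`. -/
noncomputable def condProbY (d : ℕ) (β : Fin d → Fin d → ℝ) (s : ℝ)
    (A : Finset (Fin d → Bool)) : ℝ :=
  (∑ x ∈ A, sigmoid (s * fld d β x)) / A.card

open scoped Classical in
/-- The influence `w_e = |2·Pr(y = +1 | x_i = +1, x_j = +1) − 1|` for `e = {i,j}`. -/
noncomputable def wgt (d : ℕ) (β : Fin d → Fin d → ℝ) (e : Sym2 (Fin d)) : ℝ :=
  |2 * condProbY d β 1 (Finset.univ.filter (fun x => ∀ v ∈ e, x v = true)) - 1|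

/-- The interaction graph `G = (V, I)` with `I = {{i,j} : β_{{i,j}} ≠ 0}`. -/
def interGraph (d : ℕ) (β : Fin d → Fin d → ℝ) : SimpleGraph (Fin d) :=
  SimpleGraph.fromRel (fun i j => β i j ≠ 0)

/-- The exponent `Σ_{i∈V} β_i x_i + Σ_{{i,j}∈E} β_{{i,j}} x_i x_j` of the model with both
individual effects and pairwise interactions. -/
noncomputable def fldInd (d : ℕ) (β₀ : Fin d → ℝ) (β : Fin d → Fin d → ℝ)
    (x : Fin d → Bool) : ℝ :=
  (∑ i : Fin d, β₀ i * pm (x i)) + fld d β x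

/-- The exponent `Σ_{{i,j}∈Ẽ} β_{{i,j}} x_i x_j = x_0·Σ_{i∈V} β_i x_i + Σ_{{i,j}∈E} β_{{i,j}} x_i x_j`
of the auxiliary model with the extra covariate `x_0` (here denoted `x₀`). -/
noncomputable def fldAux (d : ℕ) (β₀ : Fin d → ℝ) (β : Fin d → Fin d → ℝ)
    (x : Fin d → Bool) (x₀ : Bool) : ℝ :=
  pm x₀ * (∑ i : Fin d, β₀ i * pm (x i)) + fld d β x

/-- `Pr(y = +1 | x_V ∈ A)` in the model with individual effects and pairwise interactions. -/
noncomputable def condProbInd (d : ℕ) (β₀ : Fin d → ℝ) (β : Fin d → Fin d → ℝ)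
    (A : Finset (Fin d → Bool)) : ℝ :=
  (∑ x ∈ A, sigmoid (fldInd d β₀ β x)) / A.card

/-- `Pr(ỹ = +1 | (x_V, x_0) ∈ A)` in the auxiliary model (the extra covariate `x_0` is
uniform on `{−1,+1}` and independent of `x_V`). -/
noncomputable def condProbAux (d : ℕ) (β₀ : Fin d → ℝ) (β : Fin d → Fin d → ℝ)
    (A : Finset ((Fin d → Bool) × Bool)) : ℝ :=
  (∑ z ∈ A, sigmoid (fldAux d β₀ β z.1 z.2)) / A.card

/-- The auxiliary-model weight `w̃_{{i,j}} = |2·Pr(ỹ = +1 | x_i = +1, x_j = +1) − 1|`. -/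
noncomputable def wtilde (d : ℕ) (β₀ : Fin d → ℝ) (β : Fin d → Fin d → ℝ)
    (i j : Fin d) : ℝ :=
  |2 * condProbAux d β₀ β
      (Finset.univ.filter (fun z : (Fin d → Bool) × Bool =>
        z.1 i = true ∧ z.1 j = true)) - 1|

/-- Section IV: in the model with individual effects and pairwise
interactions, for any two distinct `i, j ∈ V` the auxiliary-model weight satisfies
`w̃_{{i,j}} = |Pr(y=+1|x_i=+1,x_j=+1) + Pr(y=+1|x_i=−1,x_j=−1) − 1|`; equivalently,
`Pr(ỹ=+1|x_i=+1,x_j=+1) = ½·Pr(y=+1|x_i=+1,x_j=+1) + ½·Pr(y=+1|x_i=−1,x_j=−1)`. -/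

lemma pm_not (b : Bool) : pm (!b) = - pm b := by cases b <;> simp [pm]

lemma fld_flip (d : ℕ) (β : Fin d → Fin d → ℝ) (x : Fin d → Bool) :
    fld d β (fun k => !(x k)) = fld d β x := by
  unfold fld
  refine Finset.sum_congr rfl fun a _ => Finset.sum_congr rfl fun b _ => ?_
  rw [pm_not, pm_not]; ring

lemma fldAux_true (d : ℕ) (β₀ : Fin d → ℝ) (β : Fin d → Fin d → ℝ) (x : Fin d → Bool) :
    fldAux d β₀ β x true = fldInd d β₀ β x := by
  simp [fldAux, fldInd, pm]

lemma fldAux_false (d : ℕ) (β₀ : Fin d → ℝ) (β : Fin d → Fin d → ℝ) (x : Fin d → Bool) :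
    fldAux d β₀ β x false = fldInd d β₀ β (fun k => !(x k)) := by
  simp only [fldAux, fldInd, fld_flip]
  congr 1
  rw [show pm false = -1 from rfl, neg_one_mul, ← Finset.sum_neg_distrib]
  exact Finset.sum_congr rfl fun a _ => by rw [pm_not]; ring

theorem statement19 (d : ℕ) (hd : 2 ≤ d) (β₀ : Fin d → ℝ) (β : Fin d → Fin d → ℝ)
    (hsymm : ∀ i j, β i j = β j i)
    (i j : Fin d) (hij : i ≠ j) :
    wtilde d β₀ β i j =
      |condProbInd d β₀ β
          (Finset.univ.filter (fun x : Fin d → Bool => x i = true ∧ x j = true)) +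
        condProbInd d β₀ β
          (Finset.univ.filter (fun x : Fin d → Bool => x i = false ∧ x j = false)) - 1| ∧
    condProbAux d β₀ β
        (Finset.univ.filter (fun z : (Fin d → Bool) × Bool =>
          z.1 i = true ∧ z.1 j = true)) =
      (1 / 2) * condProbInd d β₀ β
          (Finset.univ.filter (fun x : Fin d → Bool => x i = true ∧ x j = true)) +
      (1 / 2) * condProbInd d β₀ β
          (Finset.univ.filter (fun x : Fin d → Bool => x i = false ∧ x j = false)) := by
  classical
  set B₁ : Finset (Fin d → Bool) :=
    Finset.univ.filter (fun x : Fin d → Bool => x i = true ∧ x j = true) with hB₁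
  set B₂ : Finset (Fin d → Bool) :=
    Finset.univ.filter (fun x : Fin d → Bool => x i = false ∧ x j = false) with hB₂
  set A : Finset ((Fin d → Bool) × Bool) :=
    Finset.univ.filter (fun z : (Fin d → Bool) × Bool =>
      z.1 i = true ∧ z.1 j = true) with hA
  have hAeq : A = B₁ ×ˢ (Finset.univ : Finset Bool) := by
    ext z; simp [hA, hB₁]
  -- bijection between B₁ and B₂ via global flip
  have hflip₁ : ∀ x ∈ B₁, (fun k => !(x k)) ∈ B₂ := by
    intro x hx; simp [hB₁, hB₂] at hx ⊢; simp [hx.1, hx.2]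
  have hflip₂ : ∀ x ∈ B₂, (fun k => !(x k)) ∈ B₁ := by
    intro x hx; simp [hB₁, hB₂] at hx ⊢; simp [hx.1, hx.2]
  have hsum2 : (∑ x ∈ B₁, sigmoid (fldInd d β₀ β (fun k => !(x k))))
      = ∑ x ∈ B₂, sigmoid (fldInd d β₀ β x) := by
    refine Finset.sum_nbij' (fun x => fun k => !(x k)) (fun x => fun k => !(x k))
      hflip₁ hflip₂ ?_ ?_ ?_
    · intro x _; funext k; simp
    · intro x _; funext k; simp
    · intro x _; rfl
  have hcard : B₂.card = B₁.card := by
    refine (Finset.card_nbij' (fun x => fun k => !(x k)) (fun x => fun k => !(x k))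
      hflip₂ hflip₁ ?_ ?_)
    · intro x _; funext k; simp
    · intro x _; funext k; simp
  have hN : (0 : ℝ) < B₁.card := by
    have : (fun _ => true) ∈ B₁ := by simp [hB₁]
    exact_mod_cast Finset.card_pos.mpr ⟨_, this⟩
  have hsumA : (∑ z ∈ A, sigmoid (fldAux d β₀ β z.1 z.2))
      = (∑ x ∈ B₁, sigmoid (fldInd d β₀ β x)) + ∑ x ∈ B₂, sigmoid (fldInd d β₀ β x) := by
    rw [hAeq, Finset.sum_product, ← hsum2, ← Finset.sum_add_distrib]
    refine Finset.sum_congr rfl fun x _ => ?_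
    rw [show (Finset.univ : Finset Bool) = {true, false} by rfl]
    rw [Finset.sum_insert (by simp), Finset.sum_singleton, fldAux_true, fldAux_false]
  have hcardA : (A.card : ℝ) = 2 * B₁.card := by
    rw [hAeq, Finset.card_product]
    simp [mul_comm]
  have key : condProbAux d β₀ β A =
      (1 / 2) * condProbInd d β₀ β B₁ + (1 / 2) * condProbInd d β₀ β B₂ := by
    unfold condProbAux condProbInd
    rw [hsumA, hcardA, hcard]
    field_simp
  refine ⟨?_, key⟩
  unfold wtilde
  rw [show (Finset.univ.filter (fun z : (Fin d → Bool) × Bool =>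
        z.1 i = true ∧ z.1 j = true)) = A from rfl, key]
  congr 1
  ring
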